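/- Let G be the infinite comb: the graph with vertices {v_j, w_j : j ∈ ℕ} and edges v_j ~ w_j for all j ∈ ℕ and v_j ~ v_{j+1} for all j ∈ ℕ. For every 1 ≤ p < ∞, the shift operator S on ℓ^p(G) has no eigenvalues: if f ∈ ℓ^p(G) and Sf = λf for some λ ∈ ℂ, then f = 0. -/

import Mathlib

/-- The shift (adjacency) operator: `(Sf)(u) = ∑_{v ~ u} f(v)`. -/
noncomputable def shiftOp {V : Type*} (G : SimpleGraph V) (f : V → ℂ) (u : V) : ℂ :=
  ∑ᶠ v ∈ G.neighborSet u, f v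

/-- Membership in ℓ^p: `∑_{v} |f(v)|^p < ∞`. -/
def memlp {V : Type*} (f : V → ℂ) (p : ℝ) : Prop :=
  Summable fun v => ‖f v‖ ^ p

/-- Base relation for the infinite comb: `Sum.inl j` is the spine vertex `v_j` and
`Sum.inr j` is the tooth vertex `w_j`; edges are `v_j ~ v_{j+1}` and `v_j ~ w_j`. -/
def icombRel : (ℕ ⊕ ℕ) → (ℕ ⊕ ℕ) → Prop
  | Sum.inl j, Sum.inl k => k = j + 1
  | Sum.inl j, Sum.inr k => j = k
  | _, _ => False

/-- The infinite comb. -/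
def icomb : SimpleGraph (ℕ ⊕ ℕ) :=
  SimpleGraph.fromRel icombRel

lemma ns_inr (j : ℕ) : icomb.neighborSet (Sum.inr j) = {Sum.inl j} := by
  ext x
  cases x with
  | inl k => simp [icomb, icombRel, SimpleGraph.mem_neighborSet]
  | inr k => simp [icomb, icombRel, SimpleGraph.mem_neighborSet]

lemma ns_inl0 : icomb.neighborSet (Sum.inl 0) = {Sum.inl 1, Sum.inr 0} := by
  ext x
  cases x with
  | inl k => simp [icomb, icombRel, SimpleGraph.mem_neighborSet]; omega
  | inr k => simp [icomb, icombRel, SimpleGraph.mem_neighborSet]; omega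

lemma ns_inlS (j : ℕ) : icomb.neighborSet (Sum.inl (j+1)) =
    {Sum.inl j, Sum.inl (j+2), Sum.inr (j+1)} := by
  ext x
  cases x with
  | inl k => simp [icomb, icombRel, SimpleGraph.mem_neighborSet]; omega
  | inr k => simp [icomb, icombRel, SimpleGraph.mem_neighborSet]; omega

lemma shift_inr (f : (ℕ ⊕ ℕ) → ℂ) (j : ℕ) :
    shiftOp icomb f (Sum.inr j) = f (Sum.inl j) := by
  rw [shiftOp, ns_inr, finsum_mem_singleton]

lemma shift_inl0 (f : (ℕ ⊕ ℕ) → ℂ) :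
    shiftOp icomb f (Sum.inl 0) = f (Sum.inl 1) + f (Sum.inr 0) := by
  rw [shiftOp, ns_inl0, finsum_mem_pair (by simp)]

lemma shift_inlS (f : (ℕ ⊕ ℕ) → ℂ) (j : ℕ) :
    shiftOp icomb f (Sum.inl (j+1)) =
      f (Sum.inl j) + f (Sum.inl (j+2)) + f (Sum.inr (j+1)) := by
  rw [shiftOp, ns_inlS]
  have : ({Sum.inl j, Sum.inl (j+2), Sum.inr (j+1)} : Set (ℕ ⊕ ℕ)) =
      (↑({Sum.inl j, Sum.inl (j+2), Sum.inr (j+1)} : Finset (ℕ ⊕ ℕ))) := by simp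
  rw [this, finsum_mem_coe_finset]
  rw [Finset.sum_insert (by simp), Finset.sum_insert (by simp), Finset.sum_singleton]
  ring

/-- For every `1 ≤ p < ∞`, the shift operator on `ℓ^p` of the infinite
comb has no eigenvalues: if `f ∈ ℓ^p` and `Sf = λf` for some `λ ∈ ℂ`, then `f = 0`. -/
theorem stmt17 (p : ℝ) (hp : 1 ≤ p) (z : ℂ) (f : (ℕ ⊕ ℕ) → ℂ)
    (hf : memlp f p) (heig : ∀ x, shiftOp icomb f x = z * f x) :
    f = 0 := by
  have hf : Summable fun v => ‖f v‖ ^ p := hf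

  set a : ℕ → ℂ := fun n => f (Sum.inl n) with ha_def
  have E1 : ∀ j, f (Sum.inl j) = z * f (Sum.inr j) := fun j => by
    rw [← shift_inr f j]; exact heig _
  have E2 : f (Sum.inl 1) + f (Sum.inr 0) = z * f (Sum.inl 0) := by
    rw [← shift_inl0]; exact heig _
  have E3 : ∀ j, f (Sum.inl j) + f (Sum.inl (j+2)) + f (Sum.inr (j+1))
      = z * f (Sum.inl (j+1)) := fun j => by
    rw [← shift_inlS]; exact heig _
  rcases eq_or_ne z 0 with hz | hz
  · subst hz
    have hA : ∀ j, f (Sum.inl j) = 0 := fun j => by simpa using E1 j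
    funext x
    cases x with
    | inl j => exact hA j
    | inr j =>
      cases j with
      | zero => have := E2; simp [hA] at this; simpa using this
      | succ k => have := E3 k; simp [hA] at this; simpa using this
  -- z ≠ 0 case
  have hb : ∀ j, f (Sum.inr j) = a j / z := fun j => by
    field_simp [ha_def]; rw [mul_comm]; exact (E1 j).symm
  set μ : ℂ := z - 1/z with hμ
  have hA1 : a 1 = μ * a 0 := by
    have := E2
    rw [hb 0] at this
    rw [hμ]
    change f (Sum.inl 1) = (z - 1/z) * f (Sum.inl 0)
    change f (Sum.inl 1) + f (Sum.inl 0) / z = z * f (Sum.inl 0) at this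
    linear_combination this
  have hrec : ∀ j, a (j+2) = μ * a (j+1) - a j := fun j => by
    have := E3 j
    rw [hb (j+1)] at this
    rw [hμ]
    change f (Sum.inl (j+2)) = (z - 1/z) * f (Sum.inl (j+1)) - f (Sum.inl j)
    change f (Sum.inl j) + f (Sum.inl (j+2)) + f (Sum.inl (j+1)) / z = z * f (Sum.inl (j+1)) at this
    linear_combination this
  -- a tends to 0
  have ha_sum : Summable fun n => ‖a n‖ ^ p := hf.comp_injective Sum.inl_injective
  have hp0 : p ≠ 0 := by positivity
  have h2 : Filter.Tendsto (fun n => ‖a n‖) Filter.atTop (nhds 0) := by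
    have h1 := ha_sum.tendsto_atTop_zero
    have h3 : Filter.Tendsto (fun n => (‖a n‖ ^ p) ^ p⁻¹) Filter.atTop (nhds ((0:ℝ) ^ p⁻¹)) :=
      h1.rpow_const (Or.inr (by positivity))
    rw [Real.zero_rpow (by positivity)] at h3
    convert h3 using 2 with n
    rw [Real.rpow_rpow_inv (norm_nonneg _) hp0]
  have ha0 : Filter.Tendsto a Filter.atTop (nhds 0) :=
    tendsto_zero_iff_norm_tendsto_zero.mpr h2
  -- extended sequence g with g 0 = 0
  set g : ℕ → ℂ := fun n => Nat.rec 0 (fun k _ => a k) n with hg_def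
  have hg0 : g 0 = 0 := rfl
  have hgS : ∀ n, g (n+1) = a n := fun n => rfl
  have hgrec : ∀ n, g (n+2) = μ * g (n+1) - g n := by
    intro n
    cases n with
    | zero =>
      show a 1 = μ * a 0 - g 0
      rw [hg0, sub_zero]; exact hA1
    | succ k => rw [hgS, hgS, hgS]; exact hrec k
  set W : ℕ → ℂ := fun n => g (n+2) * g n - g (n+1)^2 with hW_def
  have hWconst : ∀ n, W n = W 0 := by
    intro n
    induction n with
    | zero => rfl
    | succ k ih =>
      rw [← ih]
      show g (k+3) * g (k+1) - g (k+2)^2 = g (k+2) * g k - g (k+1)^2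
      linear_combination g (k+1) * hgrec (k+1) - g (k+2) * hgrec k
  have hg_tend : Filter.Tendsto g Filter.atTop (nhds 0) :=
    (Filter.tendsto_add_atTop_iff_nat 1).mp (by simpa [hgS] using ha0)
  have hW_tend : Filter.Tendsto W Filter.atTop (nhds 0) := by
    have t2 : Filter.Tendsto (fun n => g (n+2)) Filter.atTop (nhds 0) := by
      exact ha0.comp (Filter.tendsto_add_atTop_nat 1)
    have t0 : Filter.Tendsto (fun n => g n) Filter.atTop (nhds 0) := hg_tend
    have t1 : Filter.Tendsto (fun n => g (n+1)) Filter.atTop (nhds 0) := by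
      simpa [hgS] using ha0
    have := (t2.mul t0).sub (t1.mul t1)
    simpa [hW_def, sq] using this
  have hW0 : W 0 = 0 := by
    have hconst : Filter.Tendsto (fun _ : ℕ => W 0) Filter.atTop (nhds (W 0)) :=
      tendsto_const_nhds
    exact tendsto_nhds_unique (hconst.congr fun n => (hWconst n).symm) hW_tend
  have ha00 : a 0 = 0 := by
    have : W 0 = -(a 0)^2 := by
      show g 2 * g 0 - g 1 ^ 2 = -(a 0)^2
      have h1 : g 1 = a 0 := rfl
      rw [hg0, h1]; ring
    rw [this] at hW0
    have := neg_eq_zero.mp hW0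
    exact pow_eq_zero_iff (by norm_num) |>.mp this
  have hAzero : ∀ n, a n = 0 := by
    have key : ∀ n, a n = 0 ∧ a (n+1) = 0 := by
      intro n
      induction n with
      | zero => exact ⟨ha00, by rw [hA1, ha00, mul_zero]⟩
      | succ k ih => exact ⟨ih.2, by rw [hrec k, ih.1, ih.2, mul_zero, zero_sub, neg_zero]⟩
    exact fun n => (key n).1
  funext x
  cases x with
  | inl j => exact hAzero j
  | inr j => rw [hb j, hAzero j, zero_div]; rfl
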